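/- Let ℓ ≥ 1 and let (a_n, b_n) be the mex-defined sequences. Let P := {(x,y) : x+y ≤ ℓ} ∪ {(a_n,b_n) : n ≥ 0} ∪ {(b_n,a_n) : n ≥ 0}. Then P is absorbing for the Wythoff moves: for every (x,y) ∈ ℕ² with (x,y) ∉ P (so in particular x+y > ℓ), there exists a Wythoff move from (x,y) to some element of P. -/

import Mathlib

/-- The minimum excluded value of a set of natural numbers. -/
noncomputable def mex (S : Set ℕ) : ℕ := sInf {m : ℕ | m ∉ S}

/-- `MexSeq ℓ a b` says that `a`, `b` are the sequences defined by
    `a 0 = ℓ+1`, `b 0 = 2ℓ+2`, and for `n ≥ 1`: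
    `a n = mex({a i, b i : i < n} ∪ {0,…,ℓ})`, `b n = a n + n + ℓ + 1`. -/
def MexSeq (ℓ : ℕ) (a b : ℕ → ℕ) : Prop :=
  a 0 = ℓ + 1 ∧ b 0 = 2 * ℓ + 2 ∧
  (∀ n : ℕ, 1 ≤ n →
    a n = mex ({m : ℕ | ∃ i < n, m = a i ∨ m = b i} ∪ {m : ℕ | m ≤ ℓ})) ∧
  (∀ n : ℕ, 1 ≤ n → b n = a n + n + ℓ + 1)

/-- A Wythoff move from `p` to `q` in `ℕ × ℕ`: remove a positive number of
    tokens from one pile, or the same positive number from both piles. -/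
def WythoffMove (p q : ℕ × ℕ) : Prop :=
  (q.1 = p.1 ∧ q.2 < p.2) ∨ (q.1 < p.1 ∧ q.2 = p.2) ∨
  (q.1 < p.1 ∧ q.2 < p.2 ∧ p.1 - q.1 = p.2 - q.2)

/-- The excluded set at stage `n`. -/
def mexSet (ℓ : ℕ) (a b : ℕ → ℕ) (n : ℕ) : Set ℕ :=
  {m : ℕ | ∃ i < n, m = a i ∨ m = b i} ∪ {m : ℕ | m ≤ ℓ}

lemma mexSet_finite (ℓ : ℕ) (a b : ℕ → ℕ) (n : ℕ) : (mexSet ℓ a b n).Finite := by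
  apply Set.Finite.union
  · have hsub : {m : ℕ | ∃ i < n, m = a i ∨ m = b i} ⊆ (a '' Set.Iio n) ∪ (b '' Set.Iio n) := by
      rintro m ⟨i, hi, h | h⟩
      · exact Or.inl ⟨i, hi, h.symm⟩
      · exact Or.inr ⟨i, hi, h.symm⟩
    exact (((Set.finite_Iio n).image a).union ((Set.finite_Iio n).image b)).subset hsub
  · exact Set.finite_Iic ℓ

lemma mex_not_mem {S : Set ℕ} (hS : S.Finite) : mex S ∉ S := by
  have hne : {m : ℕ | m ∉ S}.Nonempty := hS.infinite_compl.nonempty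
  exact Nat.sInf_mem hne

lemma mem_of_lt_mex {S : Set ℕ} {m : ℕ} (h : m < mex S) : m ∈ S := by
  by_contra hm
  exact absurd (Nat.sInf_le (show m ∈ {m : ℕ | m ∉ S} from hm)) (not_le.mpr h)

theorem mexSeq_ppos_absorbing (ℓ : ℕ) (hℓ : 1 ≤ ℓ) (a b : ℕ → ℕ)
    (hab : MexSeq ℓ a b)
    (P : Set (ℕ × ℕ))
    (hP : P = {p : ℕ × ℕ | p.1 + p.2 ≤ ℓ} ∪
          {p : ℕ × ℕ | ∃ n : ℕ, p = (a n, b n)} ∪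
          {p : ℕ × ℕ | ∃ n : ℕ, p = (b n, a n)}) :
    ∀ p : ℕ × ℕ, p ∉ P → ∃ q ∈ P, WythoffMove p q := by
  obtain ⟨ha0, hb0, haS, hbrec⟩ := hab
  subst hP
  -- b recursion for all n
  have hb : ∀ n, b n = a n + n + ℓ + 1 := by
    intro n
    rcases Nat.eq_zero_or_pos n with h | h
    · subst h; omega
    · exact hbrec n h
  -- a n = mex (mexSet ℓ a b n) for all n
  have haS' : ∀ n, a n = mex (mexSet ℓ a b n) := by
    intro n
    rcases Nat.eq_zero_or_pos n with h | h
    · subst h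
      have hset : {m : ℕ | m ∉ mexSet ℓ a b 0} = Set.Ici (ℓ + 1) := by
        ext m
        simp [mexSet]
      rw [ha0]
      unfold mex
      rw [hset, csInf_Ici]
    · exact haS n h
  -- a n > ℓ
  have hagt : ∀ n, ℓ < a n := by
    intro n
    by_contra h
    push_neg at h
    have hmem : a n ∈ mexSet ℓ a b n := Or.inr h
    rw [haS' n] at hmem
    exact mex_not_mem (mexSet_finite ℓ a b n) hmem
  -- anything below a n is in mexSet n
  have hlt : ∀ n m, m < a n → m ∈ mexSet ℓ a b n := by
    intro n m hm
    rw [haS' n] at hm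
    exact mem_of_lt_mex hm
  -- strict monotonicity of a
  have hmono : StrictMono a := by
    apply strictMono_nat_of_lt_succ
    intro n
    by_contra h
    push_neg at h
    have hnm : a (n + 1) ∉ mexSet ℓ a b (n + 1) := by
      rw [haS' (n + 1)]
      exact mex_not_mem (mexSet_finite ℓ a b (n + 1))
    rcases lt_or_eq_of_le h with h' | h'
    · have : a (n + 1) ∈ mexSet ℓ a b n := hlt n _ h'
      rcases this with ⟨i, hi, hh⟩ | hh
      · exact hnm (Or.inl ⟨i, Nat.lt_succ_of_lt hi, hh⟩)
      · exact hnm (Or.inr hh)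
    · exact hnm (Or.inl ⟨n, Nat.lt_succ_self n, Or.inl h'⟩)
  -- growth of a
  have hgrow : ∀ n, n + ℓ + 1 ≤ a n := by
    intro n
    induction n with
    | zero => omega
    | succ k ih =>
      have h2 : a k < a (k + 1) := hmono (by omega)
      omega
  -- coverage
  have hcover : ∀ x, ℓ < x → ∃ i, x = a i ∨ x = b i := by
    intro x hx
    have hxa : x < a x := by have := hgrow x; omega
    rcases hlt x x hxa with ⟨i, _, hh⟩ | hh
    · exact ⟨i, hh⟩
    · simp only [Set.mem_setOf_eq] at hh
      omega
  -- symmetry of P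
  have Psymm : ∀ u v : ℕ, (u, v) ∈ ({p : ℕ × ℕ | p.1 + p.2 ≤ ℓ} ∪
          {p : ℕ × ℕ | ∃ n : ℕ, p = (a n, b n)} ∪
          {p : ℕ × ℕ | ∃ n : ℕ, p = (b n, a n)}) →
      (v, u) ∈ ({p : ℕ × ℕ | p.1 + p.2 ≤ ℓ} ∪
          {p : ℕ × ℕ | ∃ n : ℕ, p = (a n, b n)} ∪
          {p : ℕ × ℕ | ∃ n : ℕ, p = (b n, a n)}) := by
    intro u v h
    rcases h with (h | ⟨n, hn⟩) | ⟨n, hn⟩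
    · exact Or.inl (Or.inl (by simp at h ⊢; omega))
    · rw [Prod.mk.injEq] at hn
      exact Or.inr ⟨n, by rw [Prod.mk.injEq]; exact ⟨hn.2, hn.1⟩⟩
    · rw [Prod.mk.injEq] at hn
      exact Or.inl (Or.inr ⟨n, by rw [Prod.mk.injEq]; exact ⟨hn.2, hn.1⟩⟩)
  -- key case: x ≤ y
  have key : ∀ x y : ℕ, x ≤ y → (x, y) ∉ ({p : ℕ × ℕ | p.1 + p.2 ≤ ℓ} ∪
          {p : ℕ × ℕ | ∃ n : ℕ, p = (a n, b n)} ∪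
          {p : ℕ × ℕ | ∃ n : ℕ, p = (b n, a n)}) →
      ∃ q ∈ ({p : ℕ × ℕ | p.1 + p.2 ≤ ℓ} ∪
          {p : ℕ × ℕ | ∃ n : ℕ, p = (a n, b n)} ∪
          {p : ℕ × ℕ | ∃ n : ℕ, p = (b n, a n)}), WythoffMove (x, y) q := by
    intro x y hxy hnot
    have hsum : ℓ < x + y := by
      by_contra h
      exact hnot (Or.inl (Or.inl (by simpa using not_lt.mp h)))
    by_cases hx : x ≤ ℓ
    · refine ⟨(x, ℓ - x), Or.inl (Or.inl (by simp; omega)), ?_⟩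
      exact Or.inl ⟨rfl, by simp; omega⟩
    · push_neg at hx
      obtain ⟨n, hcase⟩ := hcover x hx
      rcases hcase with hxa | hxb
      · rcases lt_trichotomy y (b n) with hy | hy | hy
        · have hbn := hb n
          have hdlt : y - x ≤ n + ℓ := by omega
          by_cases hd : y - x ≤ ℓ
          · refine ⟨(0, y - x), Or.inl (Or.inl (by simpa using hd)), ?_⟩
            right; right
            refine ⟨by omega, by omega, by simp; omega⟩
          · push_neg at hd
            set m := y - x - ℓ - 1 with hm
            have hmn : m < n := by omega
            have ham : a m < x := by rw [hxa]; exact hmono hmn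
            have hbm := hb m
            refine ⟨(a m, b m), Or.inl (Or.inr ⟨m, rfl⟩), ?_⟩
            right; right
            exact ⟨ham, by omega, by omega⟩
        · exact absurd (Or.inl (Or.inr ⟨n, by rw [hxa, hy]⟩)) hnot
        · exact ⟨(a n, b n), Or.inl (Or.inr ⟨n, rfl⟩), Or.inl ⟨hxa.symm, hy⟩⟩
      · have han : a n < y := by
          have := hb n
          omega
        exact ⟨(b n, a n), Or.inr ⟨n, rfl⟩, Or.inl ⟨hxb.symm, han⟩⟩
  intro p hp
  obtain ⟨x, y⟩ := p
  rcases le_total x y with h | h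
  · exact key x y h hp
  · have hp' : (y, x) ∉ ({p : ℕ × ℕ | p.1 + p.2 ≤ ℓ} ∪
          {p : ℕ × ℕ | ∃ n : ℕ, p = (a n, b n)} ∪
          {p : ℕ × ℕ | ∃ n : ℕ, p = (b n, a n)}) := fun hmem => hp (Psymm y x hmem)
    obtain ⟨q, hq, hmove⟩ := key y x h hp'
    obtain ⟨q1, q2⟩ := q
    refine ⟨(q2, q1), Psymm q1 q2 hq, ?_⟩
    rcases hmove with ⟨h1, h2⟩ | ⟨h1, h2⟩ | ⟨h1, h2, h3⟩
    · exact Or.inr (Or.inl ⟨h2, h1⟩)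
    · exact Or.inl ⟨h2, h1⟩
    · exact Or.inr (Or.inr ⟨h2, h1, h3.symm⟩)
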